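/- Let φ : R → S be an injective homomorphism of integral domains of prime characteristic p > 0 such that every element of S is algebraic over R (equivalently, the induced extension of fraction fields Frac(R) → Frac(S) is algebraic). Suppose S is a solid R-algebra and S is F-solid. Then R is F-solid. -/

import Mathlib

universe u v

/-- **Descent of F-solidity along generically algebraic solid extensions.**
Let `R → S` be an injective homomorphism of integral domains of prime characteristic `p`, with
every element of `S` algebraic over `R`.  If `S` is a solid `R`-algebra (there is a nonzero
`R`-linear map `S → R`) and `S` is F-solid (there is a nonzero `p⁻¹`-linear map on `S`), then
`R` is F-solid. -/
theorem fsolid_descends_along_algebraic_solid_extension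
    (p : ℕ) [Fact p.Prime]
    (R : Type u) (S : Type v) [CommRing R] [IsDomain R] [CommRing S] [IsDomain S]
    [CharP R p] [CharP S p] [Algebra R S]
    (hinj : Function.Injective (algebraMap R S))
    [Algebra.IsAlgebraic R S]
    (hsolid : ∃ f : S →ₗ[R] R, f ≠ 0)
    (hFsolidS : ∃ φ : S →+ S, (∀ a x : S, φ (a ^ p * x) = a * φ x) ∧ φ ≠ 0) :
    ∃ ψ : R →+ R, (∀ a x : R, ψ (a ^ p * x) = a * ψ x) ∧ ψ ≠ 0 := by
  obtain ⟨f, hf⟩ := hsolid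
  obtain ⟨φ, hφlin, hφ⟩ := hFsolidS
  -- choose x₀ with f x₀ ≠ 0 and y₀ with φ y₀ ≠ 0
  obtain ⟨x₀, hx₀⟩ : ∃ x, f x ≠ 0 := by
    by_contra h
    push_neg at h
    exact hf (LinearMap.ext fun x => h x)
  obtain ⟨y₀, hy₀⟩ : ∃ y, φ y ≠ 0 := by
    by_contra h
    push_neg at h
    exact hφ (AddMonoidHom.ext fun y => h y)
  -- φ y₀ is algebraic over R, so it divides a nonzero element of R
  obtain ⟨r₀, hr₀, u, hu⟩ :=
    (Algebra.IsAlgebraic.isAlgebraic (R := R) (φ y₀)).exists_nonzero_dvd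
      (mem_nonZeroDivisors_iff_ne_zero.mpr hy₀)
  set c : S := (u * x₀) ^ p * y₀ with hc
  refine ⟨{ toFun := fun r => f (φ (algebraMap R S r * c)),
            map_zero' := by simp,
            map_add' := fun a b => by rw [map_add, add_mul, map_add, map_add] },
          fun a x => ?_, fun hψ => ?_⟩
  · simp only [AddMonoidHom.coe_mk, ZeroHom.coe_mk, map_mul, map_pow]
    rw [mul_assoc, hφlin, ← Algebra.smul_def, map_smul, smul_eq_mul]
  · have h1 : φ (algebraMap R S 1 * c) = algebraMap R S r₀ * x₀ := by
      rw [map_one, one_mul, hc, hφlin, hu]; ring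
    have := congrArg (fun g : R →+ R => g 1) hψ
    simp only [AddMonoidHom.coe_mk, ZeroHom.coe_mk, AddMonoidHom.zero_apply, h1] at this
    rw [← Algebra.smul_def, map_smul, smul_eq_mul] at this
    exact (mul_ne_zero hr₀ hx₀) this
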